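/- Let V₁, …, V_d and W be C² vector fields on ℝ^e, let f = (f¹, …, f^d) : [0,T] → ℝ^d be C¹, let y : [0,T] → ℝ^e be a solution of the controlled ODE dy = Σᵢ Vᵢ(y) df^i started at y₀, and let J : [0,T] → L(ℝ^e, ℝ^e) be a differentiable path with J(0) = id satisfying the backward Jacobian equation J′(t) = −J(t) ∘ (Σ_{i=1}^d (f^i)′(t) (DVᵢ)(y(t))). Then for every t ∈ [0,T]: J(t)(W(y(t))) = W(y₀) + Σ_{i=1}^d [Vᵢ, W](y₀) · (f^i(t) − f^i(0)) + Σ_{i=1}^d Σ_{j=1}^d ∫₀ᵗ (f^i)′(s) ( ∫₀ˢ (f^j)′(r) · J(r)([Vⱼ, [Vᵢ, W]](y(r))) dr ) ds. -/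

import Mathlib

open Set

/-- The Lie bracket of two vector fields on `ℝ^e`:
`[V, W](x) = (DW)(x)(V(x)) − (DV)(x)(W(x))`. -/
noncomputable def lieB {e : ℕ} (V W : (Fin e → ℝ) → (Fin e → ℝ)) (x : Fin e → ℝ) :
    Fin e → ℝ :=
  fderiv ℝ W x (V x) - fderiv ℝ V x (W x)

lemma ftc_aux {E : Type*} [NormedAddCommGroup E] [NormedSpace ℝ E] [CompleteSpace E]
    {T : ℝ} (g g' : ℝ → E)
    (hg : ∀ s ∈ Icc (0:ℝ) T, HasDerivWithinAt g (g' s) (Icc 0 T) s)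
    (hg' : ContinuousOn g' (Icc 0 T)) {t : ℝ} (ht : t ∈ Icc (0:ℝ) T) :
    g t = g 0 + ∫ s in (0:ℝ)..t, g' s := by
  have h1 : Icc (0:ℝ) t ⊆ Icc 0 T := Icc_subset_Icc le_rfl ht.2
  have h2 : uIcc (0:ℝ) t ⊆ Icc 0 T := by rw [uIcc_of_le ht.1]; exact h1
  have := intervalIntegral.integral_eq_sub_of_hasDeriv_right_of_le ht.1
    (ContinuousOn.mono (fun s hs => (hg s hs).continuousWithinAt) h1)
    (fun x hx => ((hg x ⟨le_of_lt hx.1, le_trans (le_of_lt hx.2) ht.2⟩).hasDerivAt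
      (Icc_mem_nhds hx.1 (lt_of_lt_of_le hx.2 ht.2))).hasDerivWithinAt)
    ((hg'.mono h2).intervalIntegrable)
  rw [this]; abel


/-- Second-order Taylor expansion of `t ↦ J(t)(W(y(t)))` along a solution `y` of the
controlled ODE `dy = Σᵢ Vᵢ(y) dfⁱ`, with remainder involving the double brackets
`[Vⱼ, [Vᵢ, W]]`. -/
theorem stmt2 {d e : ℕ} (hd : 1 ≤ d) (he : 1 ≤ e) {T : ℝ} (hT : 0 < T)
    (V : Fin d → (Fin e → ℝ) → (Fin e → ℝ)) (W : (Fin e → ℝ) → (Fin e → ℝ))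
    (hV : ∀ i, ContDiff ℝ 2 (V i)) (hW : ContDiff ℝ 2 W)
    (f f' : ℝ → Fin d → ℝ)
    (hf : ∀ t ∈ Icc (0 : ℝ) T, HasDerivWithinAt f (f' t) (Icc 0 T) t)
    (hf' : ContinuousOn f' (Icc 0 T))
    (y₀ : Fin e → ℝ) (y : ℝ → Fin e → ℝ) (hy0 : y 0 = y₀)
    (hy : ∀ t ∈ Icc (0 : ℝ) T,
      HasDerivWithinAt y (∑ i, f' t i • V i (y t)) (Icc 0 T) t)
    (J : ℝ → (Fin e → ℝ) →L[ℝ] (Fin e → ℝ))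
    (hJ0 : J 0 = ContinuousLinearMap.id ℝ (Fin e → ℝ))
    (hJ : ∀ t ∈ Icc (0 : ℝ) T,
      HasDerivWithinAt J (-(J t).comp (∑ i, f' t i • fderiv ℝ (V i) (y t))) (Icc 0 T) t) :
    ∀ t ∈ Icc (0 : ℝ) T,
      J t (W (y t)) =
        W y₀ + (∑ i, (f t i - f 0 i) • lieB (V i) W y₀)
          + ∑ i, ∑ j, ∫ s in (0 : ℝ)..t,
              f' s i • ∫ r in (0 : ℝ)..s,
                f' r j • J r (lieB (V j) (lieB (V i) W) (y r)) := by
  have hycont : ContinuousOn y (Icc 0 T) := fun s hs => (hy s hs).continuousWithinAt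
  have hJcont : ContinuousOn J (Icc 0 T) := fun s hs => (hJ s hs).continuousWithinAt
  have hf'i : ∀ i, ContinuousOn (fun s => f' s i) (Icc (0:ℝ) T) :=
    fun i => (continuous_apply i).comp_continuousOn hf'
  -- continuity of lie brackets
  have clie : ∀ (B : (Fin e → ℝ) → (Fin e → ℝ)), ContDiff ℝ 1 B →
      ∀ i, Continuous (lieB (V i) B) := by
    intro B hB i
    unfold lieB
    exact ((hB.continuous_fderiv one_ne_zero).clm_apply (hV i).continuous).sub
      (((hV i).continuous_fderiv two_ne_zero).clm_apply hB.continuous)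
  -- key derivative computation
  have key : ∀ (B : (Fin e → ℝ) → (Fin e → ℝ)), ContDiff ℝ 1 B →
      ∀ t ∈ Icc (0:ℝ) T, HasDerivWithinAt (fun s => J s (B (y s)))
        (∑ i, f' t i • J t (lieB (V i) B (y t))) (Icc 0 T) t := by
    intro B hB t ht
    have hBy : HasDerivWithinAt (fun s => B (y s))
        (fderiv ℝ B (y t) (∑ i, f' t i • V i (y t))) (Icc 0 T) t :=
      (hB.differentiable one_ne_zero (y t)).hasFDerivAt.comp_hasDerivWithinAt t (hy t ht)
    have h := (hJ t ht).clm_apply hBy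
    refine h.congr_deriv (Eq.symm ?_)
    simp only [lieB, map_sub, map_smul, map_sum, ContinuousLinearMap.neg_apply,
      ContinuousLinearMap.comp_apply, ContinuousLinearMap.coe_sum',
      ContinuousLinearMap.coe_smul', Finset.sum_apply, Pi.smul_apply, smul_sub,
      Pi.sub_apply]
    rw [Finset.sum_sub_distrib]
    abel
  -- continuity of the integrand associated to B
  have Gcont : ∀ (B : (Fin e → ℝ) → (Fin e → ℝ)), ContDiff ℝ 1 B →
      ContinuousOn (fun s => ∑ i, f' s i • J s (lieB (V i) B (y s))) (Icc (0:ℝ) T) := by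
    intro B hB
    apply continuousOn_finset_sum
    intro i _
    exact (hf'i i).smul (hJcont.clm_apply (((clie B hB i).comp_continuousOn hycont)))
  -- first-order expansion for any C¹ field B
  have exp : ∀ (B : (Fin e → ℝ) → (Fin e → ℝ)) (hB : ContDiff ℝ 1 B),
      ∀ t ∈ Icc (0:ℝ) T, J t (B (y t)) = B y₀ +
        ∫ s in (0:ℝ)..t, ∑ i, f' s i • J s (lieB (V i) B (y s)) := by
    intro B hB t ht
    have := ftc_aux (fun s => J s (B (y s))) _ (key B hB) (Gcont B hB) ht
    simpa [hy0, hJ0] using this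
  have hW1 : ContDiff ℝ 1 W := hW.of_le one_le_two
  have hBi : ∀ i, ContDiff ℝ 1 (lieB (V i) W) := by
    intro i
    unfold lieB
    have h2 : (1:WithTop ℕ∞) + 1 ≤ 2 := by norm_num
    exact ((hW.fderiv_right h2).clm_apply ((hV i).of_le one_le_two)).sub
      (((hV i).fderiv_right h2).clm_apply hW1)
  intro t ht
  have hIccT : uIcc (0:ℝ) T = Icc 0 T := uIcc_of_le hT.le
  have huIcc : uIcc (0:ℝ) t = Icc 0 t := uIcc_of_le ht.1
  have hsub : Icc (0:ℝ) t ⊆ Icc 0 T := Icc_subset_Icc le_rfl ht.2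
  set C : Fin d → Fin e → ℝ := fun i => lieB (V i) W y₀ with hC
  set G : Fin d → Fin d → ℝ → Fin e → ℝ :=
    fun i j r => f' r j • J r (lieB (V j) (lieB (V i) W) (y r)) with hG
  have hGc : ∀ i j, ContinuousOn (G i j) (Icc (0:ℝ) T) := by
    intro i j
    exact (hf'i j).smul (hJcont.clm_apply
      (((clie (lieB (V i) W) (hBi i) j).comp_continuousOn hycont)))
  have hGint : ∀ i j, ∀ s ∈ Icc (0:ℝ) T, IntervalIntegrable (G i j) MeasureTheory.volume 0 s := by
    intro i j s hs
    exact ((hGc i j).mono (by rw [uIcc_of_le hs.1]; exact Icc_subset_Icc le_rfl hs.2)).intervalIntegrable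
  -- the primitive of G i j is continuous
  have hIcont : ∀ i j, ContinuousOn (fun s => ∫ r in (0:ℝ)..s, G i j r) (Icc (0:ℝ) T) := by
    intro i j
    have := intervalIntegral.continuousOn_primitive_interval
      (f := G i j) (a := 0) (b := T) (μ := MeasureTheory.volume)
      (by rw [hIccT]; exact (hGc i j).integrableOn_Icc)
    rwa [hIccT] at this
  -- step 1
  have step1 := exp W hW1 t ht
  -- rewrite integrand on (0, t)
  have congr1 : ∫ s in (0:ℝ)..t, ∑ i, f' s i • J s (lieB (V i) W (y s))
      = ∫ s in (0:ℝ)..t,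
          ((∑ i, f' s i • C i) + ∑ i, ∑ j, f' s i • ∫ r in (0:ℝ)..s, G i j r) := by
    apply intervalIntegral.integral_congr
    intro s hs
    rw [huIcc] at hs
    have hsT : s ∈ Icc (0:ℝ) T := hsub hs
    have h2 := fun i => exp (lieB (V i) W) (hBi i) s hsT
    simp only [h2]
    rw [← Finset.sum_add_distrib]
    congr 1
    ext i
    rw [smul_add]
    congr 1
    rw [intervalIntegral.integral_finset_sum (fun j _ => hGint i j s hsT), Finset.smul_sum]
  rw [step1, congr1]
  -- integrability of pieces
  have intA : IntervalIntegrable (fun s => ∑ i, f' s i • C i) MeasureTheory.volume 0 t := by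
    apply ContinuousOn.intervalIntegrable
    rw [huIcc]
    exact (continuousOn_finset_sum _ fun i _ =>
      ((hf'i i).smul continuousOn_const)).mono hsub
  have contB : ∀ i j, ContinuousOn (fun s => f' s i • ∫ r in (0:ℝ)..s, G i j r) (Icc (0:ℝ) T) :=
    fun i j => (hf'i i).smul (hIcont i j)
  have intB : IntervalIntegrable
      (fun s => ∑ i, ∑ j, f' s i • ∫ r in (0:ℝ)..s, G i j r) MeasureTheory.volume 0 t := by
    apply ContinuousOn.intervalIntegrable
    rw [huIcc]
    exact (continuousOn_finset_sum _ fun i _ =>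
      continuousOn_finset_sum _ fun j _ => contB i j).mono hsub
  rw [intervalIntegral.integral_add intA intB]
  have eqA : (∫ s in (0:ℝ)..t, ∑ i, f' s i • C i) = ∑ i, (f t i - f 0 i) • C i := by
    rw [intervalIntegral.integral_finset_sum (fun i _ => by
      apply ContinuousOn.intervalIntegrable
      rw [huIcc]
      exact (((hf'i i).smul continuousOn_const).mono hsub))]
    refine Finset.sum_congr rfl fun i _ => ?_
    rw [intervalIntegral.integral_smul_const]
    have hfi : ∀ s ∈ Icc (0:ℝ) T, HasDerivWithinAt (fun u => f u i) (f' s i) (Icc 0 T) s := by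
      intro s hs
      exact (ContinuousLinearMap.proj i).hasFDerivAt.comp_hasDerivWithinAt s (hf s hs)
    have h2 := ftc_aux (fun u => f u i) (fun s => f' s i) hfi (hf'i i) ht
    beta_reduce at h2
    have h3 : (∫ s in (0:ℝ)..t, f' s i) = f t i - f 0 i := by rw [h2]; ring
    rw [h3]
  have eqB : (∫ s in (0:ℝ)..t, ∑ i, ∑ j, f' s i • ∫ r in (0:ℝ)..s, G i j r)
      = ∑ i, ∑ j, ∫ s in (0:ℝ)..t, f' s i • ∫ r in (0:ℝ)..s, G i j r := by
    rw [intervalIntegral.integral_finset_sum (fun i _ => by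
      apply ContinuousOn.intervalIntegrable
      rw [huIcc]
      exact (continuousOn_finset_sum _ fun j _ => contB i j).mono hsub)]
    exact Finset.sum_congr rfl fun i _ => intervalIntegral.integral_finset_sum (fun j _ => by
      apply ContinuousOn.intervalIntegrable
      rw [huIcc]
      exact ((contB i j).mono hsub))
  rw [eqA, eqB, ← add_assoc]
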